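/- Self-dual variance of the discrete Gaussian θ₃-distribution: ( ∑_{n∈ℤ} n² e^{-πn²} ) / ( ∑_{n∈ℤ} e^{-πn²} ) = 1/(4π). That is, the variance of the discrete Gaussian θ₃-distribution with parameter c = 1 (equivalently, with lemniscatic elliptic modulus k = 1/√2) equals 1/(4π). -/

import Mathlib

open Real

/-- The `τ`-derivative of `jacobiTheta₂ 0 ·` at `τ = I`, written as a series. -/
noncomputable def thetaDeriv : ℂ :=
  ∑' n : ℤ, (π * Complex.I * (n : ℂ) ^ 2) * jacobiTheta₂_term n 0 Complex.I

lemma hI' : 0 < Complex.I.im := by simp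

lemma theta_term_eq (n : ℤ) :
    jacobiTheta₂_term n 0 Complex.I = ((Real.exp (-π * (n : ℝ) ^ 2) : ℝ) : ℂ) := by
  rw [jacobiTheta₂_term, Complex.ofReal_exp]
  congr 1
  push_cast
  ring_nf
  rw [Complex.I_sq]
  ring

open Complex in
lemma hasSum_thetaDeriv :
    HasSum (fun n : ℤ ↦ (π * Complex.I * (n : ℂ) ^ 2) * jacobiTheta₂_term n 0 Complex.I)
      thetaDeriv := by
  let eval_snd_CLM : (ℂ × ℂ →L[ℂ] ℂ) →L[ℂ] ℂ :=
  { toFun := fun f ↦ f (0, 1)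
    cont := continuous_id'.clm_apply continuous_const
    map_add' := by simp only [ContinuousLinearMap.add_apply, forall_const]
    map_smul' := by simp only [ContinuousLinearMap.coe_smul', Pi.smul_apply, smul_eq_mul,
      RingHom.id_apply, forall_const] }
  have step1 : HasSum (fun n ↦ (jacobiTheta₂_term_fderiv n 0 Complex.I) (0, 1))
      ((jacobiTheta₂_fderiv 0 Complex.I) (0, 1)) := by
    apply eval_snd_CLM.hasSum (hasSum_jacobiTheta₂_term_fderiv 0 hI')
  have step2 (n : ℤ) : (jacobiTheta₂_term_fderiv n 0 Complex.I) (0, 1) =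
      (π * Complex.I * (n : ℂ) ^ 2) * jacobiTheta₂_term n 0 Complex.I := by
    simp only [jacobiTheta₂_term_fderiv, smul_add, ContinuousLinearMap.add_apply,
      ContinuousLinearMap.coe_smul', ContinuousLinearMap.coe_fst', Pi.smul_apply, smul_eq_mul,
      mul_one, ContinuousLinearMap.coe_snd', mul_zero, zero_add, mul_comm _ (cexp _),
      jacobiTheta₂_term]
  rw [funext step2] at step1
  exact step1.summable.hasSum

open Complex in
lemma hasDerivAt_theta_snd :
    HasDerivAt (fun τ ↦ jacobiTheta₂ 0 τ) thetaDeriv Complex.I := by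
  let eval_snd_CLM : (ℂ × ℂ →L[ℂ] ℂ) →L[ℂ] ℂ :=
  { toFun := fun f ↦ f (0, 1)
    cont := continuous_id'.clm_apply continuous_const
    map_add' := by simp only [ContinuousLinearMap.add_apply, forall_const]
    map_smul' := by simp only [ContinuousLinearMap.coe_smul', Pi.smul_apply, smul_eq_mul,
      RingHom.id_apply, forall_const] }
  have step1 : HasSum (fun n ↦ (jacobiTheta₂_term_fderiv n 0 Complex.I) (0, 1))
      ((jacobiTheta₂_fderiv 0 Complex.I) (0, 1)) := by
    apply eval_snd_CLM.hasSum (hasSum_jacobiTheta₂_term_fderiv 0 hI')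
  have step2 (n : ℤ) : (jacobiTheta₂_term_fderiv n 0 Complex.I) (0, 1) =
      (π * Complex.I * (n : ℂ) ^ 2) * jacobiTheta₂_term n 0 Complex.I := by
    simp only [jacobiTheta₂_term_fderiv, smul_add, ContinuousLinearMap.add_apply,
      ContinuousLinearMap.coe_smul', ContinuousLinearMap.coe_fst', Pi.smul_apply, smul_eq_mul,
      mul_one, ContinuousLinearMap.coe_snd', mul_zero, zero_add, mul_comm _ (cexp _),
      jacobiTheta₂_term]
  rw [funext step2] at step1
  have step3 : HasDerivAt (fun τ ↦ jacobiTheta₂ 0 τ) ((jacobiTheta₂_fderiv 0 Complex.I) (0, 1))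
      Complex.I := by
    exact ((hasFDerivAt_jacobiTheta₂ 0 hI').comp Complex.I
      (hasFDerivAt_prodMk_right 0 Complex.I)).hasDerivAt
  rwa [← step1.tsum_eq] at step3

lemma theta_I_deriv_eq : thetaDeriv = (Complex.I / 4) * jacobiTheta₂ 0 Complex.I := by
  have hfun : (fun τ ↦ jacobiTheta₂ 0 τ) =
      fun τ ↦ ((-Complex.I * τ) ^ (1/2 : ℂ))⁻¹ * jacobiTheta₂ 0 (-1/τ) := by
    funext τ
    rw [jacobiTheta₂_functional_equation]
    norm_num
  have hu : HasDerivAt (fun τ : ℂ ↦ -Complex.I * τ) (-Complex.I) Complex.I := by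
    simpa using (hasDerivAt_id Complex.I).const_mul (-Complex.I)
  have huI : -Complex.I * Complex.I = 1 := by simp [Complex.I_mul_I]
  have hv : HasDerivAt (fun τ : ℂ ↦ (-Complex.I * τ) ^ (1/2 : ℂ))
      ((1/2 : ℂ) * (-Complex.I * Complex.I) ^ ((1/2 : ℂ) - 1) * (-Complex.I)) Complex.I := by
    refine hu.cpow_const ?_
    rw [huI]
    exact Complex.one_mem_slitPlane
  have hv' : HasDerivAt (fun τ : ℂ ↦ (-Complex.I * τ) ^ (1/2 : ℂ))
      (-Complex.I/2) Complex.I := by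
    convert hv using 1
    rw [huI, Complex.one_cpow]
    ring
  have hvI : (-Complex.I * Complex.I) ^ (1/2 : ℂ) = 1 := by rw [huI, Complex.one_cpow]
  have hw : HasDerivAt (fun τ : ℂ ↦ ((-Complex.I * τ) ^ (1/2 : ℂ))⁻¹)
      (Complex.I/2) Complex.I := by
    have := hv'.inv (by rw [hvI]; exact one_ne_zero)
    refine this.congr_deriv ?_
    rw [hvI]
    ring
  have hr : HasDerivAt (fun τ : ℂ ↦ -1/τ) (-1 : ℂ) Complex.I := by
    have h := (hasDerivAt_inv Complex.I_ne_zero).neg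
    have heq : (fun τ : ℂ ↦ -1/τ) = fun τ : ℂ ↦ -(τ⁻¹) := by funext τ; ring
    rw [heq]
    refine h.congr_deriv ?_
    rw [Complex.I_sq]
    norm_num
  have hptI : (-1 : ℂ)/Complex.I = Complex.I := by
    rw [div_eq_iff Complex.I_ne_zero, Complex.I_mul_I]
  have hs : HasDerivAt (fun τ : ℂ ↦ jacobiTheta₂ 0 (-1/τ)) (-thetaDeriv) Complex.I := by
    have hF : HasDerivAt (fun τ ↦ jacobiTheta₂ 0 τ) thetaDeriv ((-1 : ℂ)/Complex.I) := by
      rw [hptI]; exact hasDerivAt_theta_snd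
    have := hF.comp Complex.I hr
    exact this.congr_deriv (by ring)
  have hG : HasDerivAt
      (fun τ : ℂ ↦ ((-Complex.I * τ) ^ (1/2 : ℂ))⁻¹ * jacobiTheta₂ 0 (-1/τ))
      (Complex.I/2 * jacobiTheta₂ 0 Complex.I - thetaDeriv) Complex.I := by
    have := hw.mul hs
    rw [hptI] at this
    refine this.congr_deriv ?_
    rw [hvI]
    ring
  have huniq : thetaDeriv = Complex.I/2 * jacobiTheta₂ 0 Complex.I - thetaDeriv := by
    refine hasDerivAt_theta_snd.unique ?_
    rw [hfun]
    exact hG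
  have h2 : (2 : ℂ) * thetaDeriv = Complex.I/2 * jacobiTheta₂ 0 Complex.I := by
    linear_combination huniq
  field_simp
  linear_combination 2 * h2

/-- Self-dual variance of the discrete Gaussian `θ₃`-distribution at `c = 1`. -/
theorem discreteGaussian_variance_self_dual :
    (∑' n : ℤ, (n : ℝ) ^ 2 * Real.exp (-π * (n : ℝ) ^ 2)) /
        (∑' n : ℤ, Real.exp (-π * (n : ℝ) ^ 2))
      = 1 / (4 * π) := by
  set S₂ : ℝ := ∑' n : ℤ, (n : ℝ) ^ 2 * Real.exp (-π * (n : ℝ) ^ 2) with hS₂def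
  set S₀ : ℝ := ∑' n : ℤ, Real.exp (-π * (n : ℝ) ^ 2) with hS₀def
  -- The value of jacobiTheta₂ 0 I is the real series S₀.
  have hsum0 : HasSum (fun n : ℤ ↦ jacobiTheta₂_term n 0 Complex.I) (jacobiTheta₂ 0 Complex.I) :=
    hasSum_jacobiTheta₂_term 0 hI'
  rw [funext theta_term_eq] at hsum0
  have hS₀sum : Summable (fun n : ℤ ↦ Real.exp (-π * (n : ℝ) ^ 2)) :=
    Complex.summable_ofReal.mp hsum0.summable
  have hS₀c : ((S₀ : ℝ) : ℂ) = jacobiTheta₂ 0 Complex.I := by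
    refine HasSum.unique ?_ hsum0
    exact Complex.ofRealCLM.hasSum hS₀sum.hasSum
  -- The derivative series.
  have hsum2 := hasSum_thetaDeriv
  have hrw : (fun n : ℤ ↦ (π * Complex.I * (n : ℂ) ^ 2) * jacobiTheta₂_term n 0 Complex.I)
      = fun n : ℤ ↦ (π * Complex.I) *
          (((n : ℝ) ^ 2 * Real.exp (-π * (n : ℝ) ^ 2) : ℝ) : ℂ) := by
    funext n
    rw [theta_term_eq]
    push_cast
    ring
  rw [hrw] at hsum2
  have hπI : (π : ℂ) * Complex.I ≠ 0 :=
    mul_ne_zero (Complex.ofReal_ne_zero.mpr pi_ne_zero) Complex.I_ne_zero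
  have hsum2' : HasSum (fun n : ℤ ↦ (((n : ℝ) ^ 2 * Real.exp (-π * (n : ℝ) ^ 2) : ℝ) : ℂ))
      (((π : ℂ) * Complex.I)⁻¹ * thetaDeriv) := by
    have h := hsum2.mul_left ((π : ℂ) * Complex.I)⁻¹
    have heq : (fun n : ℤ ↦ ((π : ℂ) * Complex.I)⁻¹ * ((π * Complex.I) *
        (((n : ℝ) ^ 2 * Real.exp (-π * (n : ℝ) ^ 2) : ℝ) : ℂ)))
        = fun n : ℤ ↦ (((n : ℝ) ^ 2 * Real.exp (-π * (n : ℝ) ^ 2) : ℝ) : ℂ) := by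
      funext n
      rw [← mul_assoc, inv_mul_cancel₀ hπI, one_mul]
    rwa [heq] at h
  have hS₂sum : Summable (fun n : ℤ ↦ (n : ℝ) ^ 2 * Real.exp (-π * (n : ℝ) ^ 2)) :=
    Complex.summable_ofReal.mp hsum2'.summable
  have hS₂c : ((S₂ : ℝ) : ℂ) = ((π : ℂ) * Complex.I)⁻¹ * thetaDeriv := by
    refine HasSum.unique ?_ hsum2'
    exact Complex.ofRealCLM.hasSum hS₂sum.hasSum
  -- combine with the functional-equation identity
  have hkey : (π : ℂ) * Complex.I * (S₂ : ℂ) = Complex.I / 4 * (S₀ : ℂ) := by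
    rw [hS₂c, hS₀c, ← theta_I_deriv_eq, ← mul_assoc, mul_inv_cancel₀ hπI, one_mul]
  have hreal : π * S₂ = S₀ / 4 := by
    have hz : Complex.I * ((π : ℂ) * (S₂ : ℂ) - (S₀ : ℂ) / 4) = 0 := by
      linear_combination hkey
    have h0 := (mul_eq_zero.mp hz).resolve_left Complex.I_ne_zero
    have : ((π * S₂ - S₀ / 4 : ℝ) : ℂ) = 0 := by push_cast; linear_combination h0
    have := Complex.ofReal_eq_zero.mp this
    linarith
  -- positivity of S₀
  have hS₀pos : 0 < S₀ := by
    refine Summable.tsum_pos hS₀sum (fun n ↦ (Real.exp_pos _).le) 0 ?_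
    exact Real.exp_pos _
  rw [div_eq_iff (ne_of_gt hS₀pos), one_div, eq_comm, inv_mul_eq_div, div_eq_iff ?_]
  · linarith
  · positivity
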